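/- Let 𝔤 be an involutive Lie bialgebra over a field of characteristic zero, with bracket [−,−], cobracket δ : 𝔤 → Λ²𝔤, and involutivity condition [−,−] ∘ δ = 0. Let Δ be the Chevalley-Eilenberg differential on S(𝔤[-1]) induced by the bracket, and let d be the extension of δ as a degree-one derivation of S(𝔤[-1]). Then dΔ + Δd = 0. -/

import Mathlib

/-!
STATEMENT 9: For an involutive Lie bialgebra `𝔤`, on the Chevalley–Eilenberg complex
`S(𝔤[-1]) ≅ Λ(𝔤)` (exterior algebra, since `𝔤` sits in odd degree), the CE operator `Δ`
induced by the bracket and the derivation `d` extending the cobracket `δ` anticommute: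
`dΔ + Δd = 0`.
Here `Δ` is characterised by `Δ1 = 0`, `Δ(ι x) = 0`, `Δ(ι x · ξ) = -ι x · Δξ + L_x ξ`
(`L_x` the derivation extending the adjoint action), `d` by `d1 = 0`, `d(ι x) = δ x`,
`d(ι x · ξ) = δ x · ξ - ι x · d ξ`; the 1-cocycle condition, co-Jacobi (as `d∘δ = 0`) and
involutivity (`[-,-] ∘ δ = 0`, i.e. `Δ(δ x) = 0`) are imposed.
-/

set_option maxHeartbeats 3200000 in
theorem involutive_lie_bialgebra_bv_anticommute
    {k G : Type*} [Field k] [CharZero k]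
    [LieRing G] [LieAlgebra k G]
    -- the adjoint-action derivations L_x of Λ𝔤
    (L : G → (ExteriorAlgebra k G →ₗ[k] ExteriorAlgebra k G))
    (hL1 : ∀ x, L x 1 = 0)
    (hLder : ∀ x (u v : ExteriorAlgebra k G), L x (u * v) = L x u * v + u * L x v)
    (hLι : ∀ x y, L x (ExteriorAlgebra.ι k y) = ExteriorAlgebra.ι k ⁅x, y⁆)
    -- the CE operator Δ induced by the Lie bracket
    (Δ : ExteriorAlgebra k G →ₗ[k] ExteriorAlgebra k G)
    (hΔ1 : Δ 1 = 0)
    (hΔι : ∀ x, Δ (ExteriorAlgebra.ι k x) = 0)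
    (hΔrec : ∀ x (ξ : ExteriorAlgebra k G),
      Δ (ExteriorAlgebra.ι k x * ξ) = - (ExteriorAlgebra.ι k x) * Δ ξ + L x ξ)
    -- the cobracket δ : 𝔤 → Λ²𝔤
    (δ : G →ₗ[k] ExteriorAlgebra k G)
    (hδdeg : ∀ x, δ x ∈
      ((LinearMap.range (ExteriorAlgebra.ι k : G →ₗ[k] ExteriorAlgebra k G)) *
        (LinearMap.range (ExteriorAlgebra.ι k : G →ₗ[k] ExteriorAlgebra k G)) :
          Submodule k (ExteriorAlgebra k G)))
    -- the 1-cocycle condition on δ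
    (hcocycle : ∀ x y, δ ⁅x, y⁆ = L x (δ y) - L y (δ x))
    -- d : the degree-one derivation of Λ𝔤 extending δ
    (d : ExteriorAlgebra k G →ₗ[k] ExteriorAlgebra k G)
    (hd1 : d 1 = 0)
    (hdι : ∀ x, d (ExteriorAlgebra.ι k x) = δ x)
    (hdrec : ∀ x (ξ : ExteriorAlgebra k G),
      d (ExteriorAlgebra.ι k x * ξ) = δ x * ξ - ExteriorAlgebra.ι k x * d ξ)
    -- co-Jacobi: d ∘ δ = 0
    (hcojac : ∀ x, d (δ x) = 0)
    -- involutivity: [-,-] ∘ δ = 0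
    (hinv : ∀ x, Δ (δ x) = 0) :
    ∀ ξ : ExteriorAlgebra k G, d (Δ ξ) + Δ (d ξ) = 0 := by
  classical
  set ι' : G →ₗ[k] ExteriorAlgebra k G := ExteriorAlgebra.ι k with hι'
  -- elements of (range ι) * (range ι) commute with each ι y
  have hcomm : ∀ (y : G) (w : ExteriorAlgebra k G),
      w ∈ ((LinearMap.range ι') * (LinearMap.range ι') :
        Submodule k (ExteriorAlgebra k G)) →
      w * ι' y = ι' y * w := by
    intro y w hw
    refine Submodule.mul_induction_on hw ?_ ?_
    · rintro m ⟨a, rfl⟩ n ⟨b, rfl⟩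
      have h1 : ι' b * ι' y = -(ι' y * ι' b) :=
        eq_neg_of_add_eq_zero_left (ExteriorAlgebra.ι_add_mul_swap b y)
      have h2 : -(ι' a * ι' y) = ι' y * ι' a := by
        rw [eq_neg_of_add_eq_zero_left (ExteriorAlgebra.ι_add_mul_swap a y), neg_neg]
      rw [mul_assoc, h1, mul_neg, ← mul_assoc, ← neg_mul, h2, mul_assoc]
    · intro u v hu hv
      rw [add_mul, mul_add, hu, hv]
  -- monomials span the exterior algebra
  set S : Set (ExteriorAlgebra k G) :=
    {w | ∃ l : List G, (l.map ι').prod = w} with hS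
  have hSmul : ∀ a ∈ S, ∀ b ∈ S, a * b ∈ S := by
    rintro _ ⟨l, rfl⟩ _ ⟨m, rfl⟩
    exact ⟨l ++ m, by rw [List.map_append, List.prod_append]⟩
  have hclosed : ∀ a b : ExteriorAlgebra k G,
      a ∈ Submodule.span k S → b ∈ Submodule.span k S →
      a * b ∈ Submodule.span k S := by
    intro a b ha hb
    have h := Submodule.mul_mem_mul ha hb
    rw [Submodule.span_mul_span] at h
    exact Submodule.span_mono (Set.mul_subset_iff.mpr hSmul) h
  have hspan : ∀ ξ : ExteriorAlgebra k G, ξ ∈ Submodule.span k S := by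
    intro ξ
    induction ξ using ExteriorAlgebra.induction with
    | algebraMap r =>
        rw [Algebra.algebraMap_eq_smul_one]
        exact Submodule.smul_mem _ _ (Submodule.subset_span ⟨[], by simp⟩)
    | ι x => exact Submodule.subset_span ⟨[x], by simp [hι']⟩
    | mul a b ha hb => exact hclosed a b ha hb
    | add a b ha hb => exact Submodule.add_mem _ ha hb
  -- auxiliary identity: Δ(δx·ξ) - δx·Δξ + (d(Lₓξ) - Lₓ(dξ)) = 0
  have hG : ∀ (x : G) (ξ : ExteriorAlgebra k G),
      Δ (δ x * ξ) - δ x * Δ ξ + (d (L x ξ) - L x (d ξ)) = 0 := by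
    intro x ξ
    refine Submodule.span_induction
      (p := fun ξ _ => Δ (δ x * ξ) - δ x * Δ ξ + (d (L x ξ) - L x (d ξ)) = 0)
      ?_ ?_ ?_ ?_ (hspan ξ)
    · rintro _ ⟨l, rfl⟩
      induction l with
      | nil =>
          simp only [List.map_nil, List.prod_nil, mul_one, hΔ1, hL1, hd1, map_zero,
            mul_zero, hinv x]
          abel
      | cons y l ih =>
          rw [List.map_cons, List.prod_cons]
          set ξ₀ := (l.map ι').prod with hξ₀
          have hc1 : δ x * ι' y = ι' y * δ x := hcomm y (δ x) (hδdeg x)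
          have A1 : Δ (δ x * (ι' y * ξ₀)) =
              -ι' y * Δ (δ x * ξ₀) + (L y (δ x) * ξ₀ + δ x * L y ξ₀) := by
            rw [← mul_assoc, hc1, mul_assoc, hΔrec y (δ x * ξ₀), hLder y (δ x) ξ₀]
          have A2 : δ x * Δ (ι' y * ξ₀) =
              -(ι' y * (δ x * Δ ξ₀)) + δ x * L y ξ₀ := by
            rw [hΔrec y ξ₀, mul_add]
            congr 1
            rw [neg_mul, mul_neg, ← mul_assoc, hc1, mul_assoc]
          have A3 : d (L x (ι' y * ξ₀)) =
              (δ ⁅x, y⁆ * ξ₀ - ι' ⁅x, y⁆ * d ξ₀) + (δ y * L x ξ₀ - ι' y * d (L x ξ₀)) := by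
            rw [hLder x (ι' y) ξ₀, hLι x y, map_add, hdrec ⁅x, y⁆ ξ₀, hdrec y (L x ξ₀)]
          have A4 : L x (d (ι' y * ξ₀)) =
              (L x (δ y) * ξ₀ + δ y * L x ξ₀) - (ι' ⁅x, y⁆ * d ξ₀ + ι' y * L x (d ξ₀)) := by
            rw [hdrec y ξ₀, map_sub, hLder x (δ y) ξ₀, hLder x (ι' y) (d ξ₀), hLι x y]
          have hP : Δ (δ x * ξ₀) = δ x * Δ ξ₀ - (d (L x ξ₀) - L x (d ξ₀)) := by
            have h2 := eq_neg_of_add_eq_zero_left ih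
            rw [sub_eq_iff_eq_add] at h2
            rw [h2]; abel
          rw [A1, A2, A3, A4, hcocycle x y, hP]
          noncomm_ring
    · simp
    · intro u v _ _ hu hv
      have h : (Δ (δ x * u) - δ x * Δ u + (d (L x u) - L x (d u)))
          + (Δ (δ x * v) - δ x * Δ v + (d (L x v) - L x (d v))) = 0 := by
        rw [hu, hv, add_zero]
      calc Δ (δ x * (u + v)) - δ x * Δ (u + v) + (d (L x (u + v)) - L x (d (u + v)))
          = (Δ (δ x * u) - δ x * Δ u + (d (L x u) - L x (d u)))
            + (Δ (δ x * v) - δ x * Δ v + (d (L x v) - L x (d v))) := by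
            simp only [mul_add, map_add]; abel
        _ = 0 := h
    · intro a u _ hu
      calc Δ (δ x * (a • u)) - δ x * Δ (a • u) + (d (L x (a • u)) - L x (d (a • u)))
          = a • (Δ (δ x * u) - δ x * Δ u + (d (L x u) - L x (d u))) := by
            simp only [mul_smul_comm, map_smul, smul_sub, smul_add]
        _ = 0 := by rw [hu, smul_zero]
  -- main statement
  intro ξ
  refine Submodule.span_induction
    (p := fun ξ _ => d (Δ ξ) + Δ (d ξ) = 0) ?_ ?_ ?_ ?_ (hspan ξ)
  · rintro _ ⟨l, rfl⟩
    induction l with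
    | nil =>
        rw [List.map_nil, List.prod_nil, hΔ1, hd1, map_zero, map_zero, add_zero]
    | cons y l ih =>
        rw [List.map_cons, List.prod_cons]
        set ξ₀ := (l.map ι').prod with hξ₀
        have B1 : d (Δ (ι' y * ξ₀)) =
            -(δ y * Δ ξ₀ - ι' y * d (Δ ξ₀)) + d (L y ξ₀) := by
          rw [hΔrec y ξ₀, map_add, neg_mul, map_neg, hdrec y (Δ ξ₀)]
        have B2 : Δ (d (ι' y * ξ₀)) =
            Δ (δ y * ξ₀) - (-ι' y * Δ (d ξ₀) + L y (d ξ₀)) := by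
          rw [hdrec y ξ₀, map_sub, hΔrec y (d ξ₀)]
        have B3 : Δ (δ y * ξ₀) = δ y * Δ ξ₀ - (d (L y ξ₀) - L y (d ξ₀)) := by
          have h2 := eq_neg_of_add_eq_zero_left (hG y ξ₀)
          rw [sub_eq_iff_eq_add] at h2
          rw [h2]; abel
        have hP : d (Δ ξ₀) = -Δ (d ξ₀) := eq_neg_of_add_eq_zero_left ih
        rw [B1, B2, B3, hP]
        noncomm_ring
  · simp
  · intro u v _ _ hu hv
    calc d (Δ (u + v)) + Δ (d (u + v))
        = (d (Δ u) + Δ (d u)) + (d (Δ v) + Δ (d v)) := by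
          simp only [map_add]; abel
      _ = 0 := by rw [hu, hv, add_zero]
  · intro a u _ hu
    calc d (Δ (a • u)) + Δ (d (a • u)) = a • (d (Δ u) + Δ (d u)) := by
          simp only [map_smul, smul_add]
      _ = 0 := by rw [hu, smul_zero]
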